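/- arXiv:2509.02393 — 2 statements merged into one kernel-verified Lean document; each statement's English description precedes it below -/
import Mathlib

section
/- Let Σ be a finite alphabet and Σ₁ ⊆ Σ₂ ⊆ Σ. Then for every word x ∈ Σ*, the set (x + Σ₂)^≤ equals the disjoint union, over all y ∈ (x + Σ₂)^≤ satisfying y − Σ₁ = y, of the sets (y + Σ₁)^≤. Moreover this union is indeed disjoint. -/
open scoped ENNReal

namespace PA

variable {α : Type*}

/-- Block contraction auxiliary: `prev` records whether the previous letter was in `K`
(i.e., we are inside a `K`-block whose first letter was already kept). -/
def contractAux [DecidableEq α] (K : Finset α) : Bool → List α → List α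
  | _, [] => []
  | prev, a :: x =>
    if a ∈ K then
      (if prev then contractAux K true x else a :: contractAux K true x)
    else a :: contractAux K false x

/-- `contract K x` is `x − K`: every maximal nonempty factor of `x` consisting of
letters of `K` is replaced by its first letter. -/
def contract [DecidableEq α] (K : Finset α) (x : List α) : List α :=
  contractAux K false x

/-- `preim K x` is `x + K`, the preimage of `x` under `contract K`. -/
def preim [DecidableEq α] (K : Finset α) (x : List α) : Set (List α) :=
  {x' | contract K x' = x}

/-- `minPref L` is `L^≤`: the prefix-minimal elements of `L`. -/
def minPref (L : Set (List α)) : Set (List α) :=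
  {x ∈ L | ∀ x', x' <+: x → x' ≠ x → x' ∉ L}

/-- Fusion concatenation: for `u` ending in `a` and `v` starting with `a`,
`fuse u v` is `u ++ v` with one copy of the shared letter removed. -/
def fuse (u v : List α) : List α := u ++ v.tail

/-- Elementwise fusion of sets of words. -/
def setFuse (X Y : Set (List α)) : Set (List α) :=
  {z | ∃ u ∈ X, ∃ v ∈ Y, z = fuse u v}

/-- Probability mass of a set of words: sum of `P` over the prefix-minimal elements. -/
noncomputable def setP (P : List α → ℝ≥0∞) (R : Set (List α)) : ℝ≥0∞ :=
  ∑' x : minPref R, P x.1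

/-- `P ∈ 𝒯(S)`: substochastic transition probability function on `S⁺`. -/
def IsTPF [Fintype α] (P : List α → ℝ≥0∞) : Prop :=
  (∀ x, P x ≤ 1) ∧ (∀ s : α, P [s] = 1) ∧
  (∀ s : α, (∑ t : α, P [s, t]) ≤ 1) ∧
  (∀ (x y : List α) (s : α), P (x ++ s :: y) = P (x ++ [s]) * P (s :: y))

/-- `(K)₀^M`: the interior of `K` in the DTMC `(P, a)`: states of `K` other than `a`
with no incoming transition from outside `K`. -/
def interior [Fintype α] [DecidableEq α] (P : List α → ℝ≥0∞) (a : α) (K : Finset α) :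
    Set α :=
  {s | s ∈ K ∧ s ≠ a ∧ (∑ t ∈ Kᶜ, P [t, s]) = 0}

open Classical in
noncomputable def abstr [Fintype α] [DecidableEq α]
    (P : List α → ℝ≥0∞) (a : α) (K : Finset α) : List α → ℝ≥0∞ :=
  fun x =>
    if x.length = 1 then 1
    else if 2 ≤ x.length ∧ ∃ s ∈ x, s ∈ interior P a K then 0
    else setP P (preim K x)

open Classical in
noncomputable def OutSet [Fintype α] (P : List α → ℝ≥0∞) (S₁ : Finset α) : Finset α :=
  Finset.univ.filter fun t => t ∉ S₁ ∧ 0 < ∑ s ∈ S₁, P [s, t]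

open Classical in
noncomputable def USet [Fintype α] (P : List α → ℝ≥0∞) (S₁ : Finset α) : Finset α :=
  Finset.univ.filter fun r => r ∈ S₁ ∧
    0 < setP P {x | ∃ (w : List α) (t : α),
      x = r :: (w ++ [t]) ∧ (∀ c ∈ w, c ∈ S₁) ∧ t ∈ OutSet P S₁}

open Classical in
noncomputable def U1Set [Fintype α] (P : List α → ℝ≥0∞) (S₁ : Finset α) : Finset α :=
  Finset.univ.filter fun r => r ∈ S₁ ∧ 0 < ∑ t ∈ OutSet P S₁, P [r, t]

end PA

section Aux
variable {α : Type*} [DecidableEq α]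

lemma contractAux_prefix (K : Finset α) : ∀ (u v : List α) (b : Bool),
    PA.contractAux K b u <+: PA.contractAux K b (u ++ v)
  | [], v, b => by simp [PA.contractAux]
  | a :: u, v, b => by
    by_cases h1 : a ∈ K
    · cases b with
      | true => simpa [PA.contractAux, h1] using contractAux_prefix K u v true
      | false =>
        simpa [PA.contractAux, h1, List.cons_prefix_cons] using
          contractAux_prefix K u v true
    · simpa [PA.contractAux, h1, List.cons_prefix_cons] using
        contractAux_prefix K u v false

lemma contract_prefix_mono (K : Finset α) {u w : List α} (huw : u <+: w) :
    PA.contract K u <+: PA.contract K w := by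
  obtain ⟨v, rfl⟩ := huw
  exact contractAux_prefix K u v false

lemma exists_prefix_contractAux (K : Finset α) : ∀ (w : List α) (b : Bool) (p : List α),
    p <+: PA.contractAux K b w → ∃ w', w' <+: w ∧ PA.contractAux K b w' = p
  | [], b, p, hp => by
    refine ⟨[], List.prefix_refl _, ?_⟩
    simpa [PA.contractAux] using (List.prefix_nil.mp (by simpa [PA.contractAux] using hp))
  | a :: x, b, p, hp => by
    by_cases h1 : a ∈ K
    · cases b with
      | true =>
        obtain ⟨w', hw', hc⟩ := exists_prefix_contractAux K x true p
          (by simpa [PA.contractAux, h1] using hp)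
        exact ⟨a :: w', List.cons_prefix_cons.mpr ⟨rfl, hw'⟩, by simpa [PA.contractAux, h1]⟩
      | false =>
        simp only [PA.contractAux, h1, if_true, if_false] at hp
        match p, hp with
        | [], _ => exact ⟨[], List.nil_prefix, by simp [PA.contractAux]⟩
        | c :: p', hp =>
          obtain ⟨rfl, hp'⟩ := List.cons_prefix_cons.mp hp
          obtain ⟨w', hw', hc⟩ := exists_prefix_contractAux K x true p' hp'
          exact ⟨c :: w', List.cons_prefix_cons.mpr ⟨rfl, hw'⟩,
            by simp [PA.contractAux, h1, hc]⟩
    · simp only [PA.contractAux, h1, if_false] at hp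
      match p, hp with
      | [], _ => exact ⟨[], List.nil_prefix, by simp [PA.contractAux]⟩
      | c :: p', hp =>
        obtain ⟨rfl, hp'⟩ := List.cons_prefix_cons.mp hp
        obtain ⟨w', hw', hc⟩ := exists_prefix_contractAux K x false p' hp'
        exact ⟨c :: w', List.cons_prefix_cons.mpr ⟨rfl, hw'⟩,
          by simp [PA.contractAux, h1, hc]⟩

lemma exists_prefix_contract (K : Finset α) {w p : List α} (hp : p <+: PA.contract K w) :
    ∃ w', w' <+: w ∧ PA.contract K w' = p :=
  exists_prefix_contractAux K w false p hp

lemma contractAux_contractAux {K₁ K₂ : Finset α} (h : K₁ ⊆ K₂) :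
    ∀ (w : List α) (b₁ b₂ : Bool), (b₁ = true → b₂ = true) →
    PA.contractAux K₂ b₂ (PA.contractAux K₁ b₁ w) = PA.contractAux K₂ b₂ w
  | [], b₁, b₂, _ => by simp [PA.contractAux]
  | a :: x, b₁, b₂, hb => by
    by_cases h1 : a ∈ K₁
    · have h2 : a ∈ K₂ := h h1
      cases b₁ with
      | true =>
        have hb2 := hb rfl; subst hb2
        simp only [PA.contractAux, h1, h2, if_true]
        exact contractAux_contractAux h x true true (fun _ => rfl)
      | false =>
        cases b₂ with
        | true =>
          simp only [PA.contractAux, h1, h2, if_true, Bool.false_eq_true, if_false]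
          exact contractAux_contractAux h x true true (fun _ => rfl)
        | false =>
          simp only [PA.contractAux, h1, h2, if_true, Bool.false_eq_true, if_false]
          rw [contractAux_contractAux h x true true (fun _ => rfl)]
    · by_cases h2 : a ∈ K₂
      · cases b₂ with
        | true =>
          simp only [PA.contractAux, h1, h2, if_true, if_false]
          exact contractAux_contractAux h x false true (fun hf => by simp at hf)
        | false =>
          simp only [PA.contractAux, h1, h2, if_true, if_false]
          rw [contractAux_contractAux h x false true (fun hf => by simp at hf)]
      · simp only [PA.contractAux, h1, h2, if_false]
        rw [contractAux_contractAux h x false false (fun hf => by simp at hf)]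

lemma contract_contract {K₁ K₂ : Finset α} (h : K₁ ⊆ K₂) (w : List α) :
    PA.contract K₂ (PA.contract K₁ w) = PA.contract K₂ w :=
  contractAux_contractAux h w false false (fun hf => by simp at hf)

lemma contract_idem (K : Finset α) (w : List α) :
    PA.contract K (PA.contract K w) = PA.contract K w :=
  contract_contract (le_refl K) w

end Aux

/-- `(x + K₂)^≤` is the disjoint union of the `(y + K₁)^≤` over the
`y ∈ (x + K₂)^≤` with `y − K₁ = y`. -/
theorem minPref_preim_decomp {α : Type*} [DecidableEq α] [Fintype α]
    (K₁ K₂ : Finset α) (h : K₁ ⊆ K₂) (x : List α) :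
    (PA.minPref (PA.preim K₂ x) =
      ⋃ y ∈ {y ∈ PA.minPref (PA.preim K₂ x) | PA.contract K₁ y = y},
        PA.minPref (PA.preim K₁ y)) ∧
    (∀ y z, y ∈ PA.minPref (PA.preim K₂ x) → PA.contract K₁ y = y →
      z ∈ PA.minPref (PA.preim K₂ x) → PA.contract K₁ z = z → y ≠ z →
      Disjoint (PA.minPref (PA.preim K₁ y)) (PA.minPref (PA.preim K₁ z))) := by
  constructor
  · ext w
    simp only [Set.mem_iUnion, Set.mem_setOf_eq, exists_prop]
    constructor
    · rintro ⟨hw, hmin⟩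
      have hw' : PA.contract K₂ w = x := hw
      refine ⟨PA.contract K₁ w, ⟨⟨?_, ?_⟩, contract_idem K₁ w⟩, rfl, ?_⟩
      · show PA.contract K₂ (PA.contract K₁ w) = x
        rw [contract_contract h]; exact hw'
      · intro y' hy' hne hy'mem
        obtain ⟨w', hw'pre, hw'c⟩ := exists_prefix_contract K₁ hy'
        have hne' : w' ≠ w := fun he => hne (by rw [← he, hw'c])
        exact hmin w' hw'pre hne' (by
          show PA.contract K₂ w' = x
          rw [← contract_contract h w', hw'c]
          exact hy'mem)
      · intro w' hpre hne hc
        have hc' : PA.contract K₁ w' = PA.contract K₁ w := hc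
        exact hmin w' hpre hne (by
          show PA.contract K₂ w' = x
          rw [← contract_contract h w', hc', contract_contract h]; exact hw')
    · rintro ⟨y, ⟨⟨hy, hymin⟩, hyfix⟩, hwy, hwmin⟩
      have hwy' : PA.contract K₁ w = y := hwy
      refine ⟨?_, ?_⟩
      · show PA.contract K₂ w = x
        rw [← contract_contract h w, hwy']; exact hy
      · intro w' hpre hne hc
        have hc' : PA.contract K₂ w' = x := hc
        set y' := PA.contract K₁ w' with hy'def
        have hy'pre : y' <+: y := hwy' ▸ contract_prefix_mono K₁ hpre
        by_cases hyy : y' = y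
        · exact hwmin w' hpre hne (show PA.contract K₁ w' = y from hyy)
        · exact hymin y' hy'pre hyy (show PA.contract K₂ y' = x by
            rw [hy'def, contract_contract h]; exact hc')
  · intro y z hy hyfix hz hzfix hne
    rw [Set.disjoint_left]
    rintro w ⟨hwy, -⟩ ⟨hwz, -⟩
    exact hne (by rw [← hwy, ← hwz])
end

section
/- Let S be a finite set with a ∈ S, let K ⊆ S, and let S₁, …, S_t ⊆ K be any finite sequence of subsets of K. Then for every substochastic DTMC M ∈ ℳ(S, a), successively abstracting over S₁, …, S_t and finally over K equals abstracting over K directly: M − (S₁, …, S_t, K) = M − K. -/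
open scoped ENNReal

namespace PA

variable {α : Type*} [DecidableEq α] {K S₁ : Finset α} {b : Bool} {a c : α} {l p q z : List α}

def lastMem (K : Finset α) (b : Bool) (l : List α) : Bool :=
  l.foldl (fun _ c => decide (c ∈ K)) b

@[simp] lemma lastMem_nil : lastMem K b [] = b := rfl

@[simp] lemma lastMem_cons : lastMem K b (a :: l) = lastMem K (decide (a ∈ K)) l := rfl

lemma lastMem_snoc : lastMem K b (l ++ [c]) = decide (c ∈ K) := by
  induction l generalizing b with
  | nil => rfl
  | cons a l ih => simp [ih]

@[simp] lemma contractAux_nil : contractAux K b [] = [] := rfl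

lemma contractAux_cons (K : Finset α) (b : Bool) (a : α) (l : List α) :
    contractAux K b (a :: l) =
      if a ∈ K then
        (if b then contractAux K true l else a :: contractAux K true l)
      else a :: contractAux K false l := rfl

lemma contractAux_append (b : Bool) (l r : List α) :
    contractAux K b (l ++ r) = contractAux K b l ++ contractAux K (lastMem K b l) r := by
  induction l generalizing b with
  | nil => simp
  | cons a l ih =>
    by_cases h : a ∈ K <;> cases b <;> simp [contractAux_cons, h, ih]

@[simp] lemma contract_nil : contract K [] = [] := rfl

lemma contract_cons (K : Finset α) (a : α) (l : List α) :
    contract K (a :: l) = a :: contractAux K (decide (a ∈ K)) l := by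
  by_cases h : a ∈ K <;> simp [contract, contractAux_cons, h]

lemma contract_eq_nil_iff : contract K z = [] ↔ z = [] := by
  cases z <;> simp [contract_cons]

lemma contractAux_sublist (b : Bool) (l : List α) : List.Sublist (contractAux K b l) l := by
  induction l generalizing b with
  | nil => simp
  | cons a l ih =>
    rw [contractAux_cons]
    split_ifs with h hb
    · exact (ih true).trans (List.sublist_cons_self a l)
    · exact (ih true).cons₂ a
    · exact (ih false).cons₂ a

lemma contractAux_length_le (b : Bool) (l : List α) :
    (contractAux K b l).length ≤ l.length :=
  (contractAux_sublist b l).length_le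

lemma contractAux_contractAux (hSK : S₁ ⊆ K) :
    ∀ (l : List α) (bS bK : Bool), (bS = true → bK = true) →
      contractAux K bK (contractAux S₁ bS l) = contractAux K bK l := by
  intro l
  induction l with
  | nil => simp
  | cons a l ih =>
    intro bS bK hb
    have ih1 := ih true true (fun _ => rfl)
    have ih2 := ih false true (fun _ => rfl)
    have ih3 := ih false false (fun h => h)
    by_cases hS : a ∈ S₁
    · have hK : a ∈ K := hSK hS
      cases bS <;> cases bK <;> simp_all [contractAux_cons]
    · by_cases hK : a ∈ K <;> cases bS <;> cases bK <;> simp_all [contractAux_cons]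

lemma contract_contract (hSK : S₁ ⊆ K) (l : List α) :
    contract K (contract S₁ l) = contract K l :=
  contractAux_contractAux hSK l false false (fun h => h)

end PA
namespace PA

variable {α : Type*} [DecidableEq α] {K S₁ : Finset α} {b : Bool} {a c s t : α} {l p q z : List α}
variable {x : List α}

lemma contractAux_prefix (b : Bool) (h : p <+: q) :
    contractAux K b p <+: contractAux K b q := by
  obtain ⟨r, rfl⟩ := h
  rw [contractAux_append]
  exact List.prefix_append _ _

lemma contract_prefix (h : p <+: q) : contract K p <+: contract K q :=
  contractAux_prefix false h

lemma contractAux_snoc_cases (b : Bool) (l : List α) (c : α) :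
    contractAux K b (l ++ [c]) = contractAux K b l ∨
      contractAux K b (l ++ [c]) = contractAux K b l ++ [c] := by
  rw [contractAux_append]
  by_cases hc : c ∈ K
  · cases hs : lastMem K b l
    · right; simp [contractAux_cons, hc]
    · left; simp [contractAux_cons, hc]
  · right; simp [contractAux_cons, hc]

lemma contract_singleton (c : α) : contract K [c] = [c] := by
  simp [contract_cons]

lemma contract_of_dropLast_ne (hz : z ≠ []) (h : contract K z.dropLast ≠ contract K z) :
    contract K z = contract K z.dropLast ++ [z.getLast hz] := by
  have e : z.dropLast ++ [z.getLast hz] = z := List.dropLast_append_getLast hz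
  have hc := contractAux_snoc_cases (K := K) false z.dropLast (z.getLast hz)
  rw [e] at hc
  exact (hc.resolve_left (fun he => h he.symm))

lemma exists_prefix_contractAux :
    ∀ (z : List α) (b : Bool) (p : List α), p <+: contractAux K b z →
      ∃ q, q <+: z ∧ contractAux K b q = p := by
  intro z
  induction z with
  | nil =>
    intro b p hp
    simp only [contractAux_nil, List.prefix_nil] at hp
    exact ⟨[], by simp [hp]⟩
  | cons a z ih =>
    intro b p hp
    rw [contractAux_cons] at hp
    by_cases ha : a ∈ K
    · rw [if_pos ha] at hp
      cases b with
      | true =>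
        rw [if_pos rfl] at hp
        obtain ⟨q, hq, he⟩ := ih true p hp
        exact ⟨a :: q, List.cons_prefix_cons.2 ⟨rfl, hq⟩,
          by rw [contractAux_cons, if_pos ha, if_pos rfl]; exact he⟩
      | false =>
        rw [if_neg (by simp)] at hp
        rcases p with _ | ⟨y, p'⟩
        · exact ⟨[], List.nil_prefix, rfl⟩
        · obtain ⟨hy, hp'⟩ := List.cons_prefix_cons.1 hp
          obtain ⟨q, hq, he⟩ := ih true p' hp'
          refine ⟨y :: q, List.cons_prefix_cons.2 ⟨hy, hq⟩, ?_⟩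
          rw [contractAux_cons, if_pos (show y ∈ K from hy ▸ ha), if_neg (by simp), he]
    · rw [if_neg ha] at hp
      rcases p with _ | ⟨y, p'⟩
      · exact ⟨[], List.nil_prefix, rfl⟩
      · obtain ⟨hy, hp'⟩ := List.cons_prefix_cons.1 hp
        obtain ⟨q, hq, he⟩ := ih false p' hp'
        refine ⟨y :: q, List.cons_prefix_cons.2 ⟨hy, hq⟩, ?_⟩
        rw [contractAux_cons, if_neg (show y ∉ K from hy ▸ ha), he]

lemma exists_prefix_contract (hp : p <+: contract K z) :
    ∃ q, q <+: z ∧ contract K q = p :=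
  exists_prefix_contractAux z false p hp

lemma mem_minPref_preim_iff :
    z ∈ minPref (preim K x) ↔
      contract K z = x ∧ (z = [] ∨ contract K z.dropLast ≠ x) := by
  constructor
  · rintro ⟨hz, hmin⟩
    refine ⟨hz, ?_⟩
    rcases eq_or_ne z [] with rfl | hne
    · exact Or.inl rfl
    · refine Or.inr fun hd => ?_
      refine hmin z.dropLast (List.dropLast_prefix z) (fun e => ?_) hd
      have := congrArg List.length e
      rw [List.length_dropLast] at this
      have : z.length ≠ 0 := fun h => hne (List.eq_nil_of_length_eq_zero h)
      omega
  · rintro ⟨hz, hmin⟩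
    refine ⟨hz, ?_⟩
    intro p hp hne hpL
    rcases hmin with rfl | hd
    · rw [List.prefix_nil] at hp
      exact hne hp
    · have hzne : z ≠ [] := by
        rintro rfl
        rw [List.prefix_nil] at hp
        exact hne hp
      have hplt : p.length < z.length :=
        lt_of_le_of_ne hp.length_le fun h => hne (List.IsPrefix.eq_of_length hp h)
      have h1 : p <+: z.dropLast := by
        refine List.prefix_of_prefix_length_le hp (List.dropLast_prefix z) ?_
        rw [List.length_dropLast]; omega
      have h2 : x <+: contract K z.dropLast := hpL ▸ contract_prefix h1
      have h3 : contract K z.dropLast <+: x := hz ▸ contract_prefix (List.dropLast_prefix z)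
      exact hd (h3.eq_of_length_le h2.length_le)

lemma minPref_preim_nil : minPref (preim K []) = {([] : List α)} := by
  ext z
  rw [mem_minPref_preim_iff]
  simp only [Set.mem_singleton_iff, contract_eq_nil_iff]
  constructor
  · rintro ⟨h, _⟩; exact h
  · rintro rfl; exact ⟨rfl, Or.inl rfl⟩

lemma minPref_preim_singleton (s : α) : minPref (preim K [s]) = {[s]} := by
  ext z
  rw [mem_minPref_preim_iff]
  constructor
  · rintro ⟨hz, h⟩
    rcases h with rfl | hd
    · simp at hz
    · have hzne : z ≠ [] := by rintro rfl; simp at hz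
      have h3 : contract K z.dropLast <+: [s] := hz ▸ contract_prefix (List.dropLast_prefix z)
      have h4 : contract K z.dropLast = [] := by
        obtain ⟨r, hr⟩ := h3
        rcases e : contract K z.dropLast with _ | ⟨u, l'⟩
        · rfl
        · exfalso
          rw [e, List.cons_append, List.cons.injEq] at hr
          obtain ⟨rfl, hr2⟩ := hr
          obtain ⟨rfl, rfl⟩ := List.append_eq_nil_iff.1 hr2
          exact hd (by rw [e])
      rw [contract_eq_nil_iff] at h4
      rcases z with _ | ⟨u, _ | ⟨v, z''⟩⟩
      · exact absurd rfl hzne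
      · rw [contract_singleton] at hz
        simp [hz]
      · simp at h4
  · rintro rfl
    refine ⟨contract_singleton s, Or.inr ?_⟩
    simp [contract_eq_nil_iff]

lemma contract_head (u : α) (z : List α) :
    contract K (u :: z) = u :: contractAux K (decide (u ∈ K)) z := contract_cons K u z

lemma mem_of_mem_contract (h : s ∈ contract K z) : s ∈ z :=
  (contractAux_sublist false z).mem h

lemma contract_cons_of_notMem (ht : t ∉ K) (w : List α) :
    contract K (t :: w) = t :: contract K w := by
  rw [contract_cons, show (decide (t ∈ K)) = false by simp [ht]]
  rfl

lemma minPref_preim_cons_of_notMem (ht : t ∉ K) (v z' : List α) :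
    (t :: z') ∈ minPref (preim K (t :: v)) ↔ z' ∈ minPref (preim K v) := by
  rw [mem_minPref_preim_iff, mem_minPref_preim_iff]
  constructor
  · rintro ⟨hz, hmin⟩
    rw [contract_cons_of_notMem ht, List.cons.injEq] at hz
    refine ⟨hz.2, ?_⟩
    rcases z' with _ | ⟨c, w⟩
    · exact Or.inl rfl
    · refine Or.inr fun hdl => ?_
      rcases hmin with h | h
      · simp at h
      · refine h ?_
        rw [show (t :: c :: w).dropLast = t :: (c :: w).dropLast by simp,
          contract_cons_of_notMem ht, hdl]
  · rintro ⟨hz, hmin⟩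
    refine ⟨by rw [contract_cons_of_notMem ht, hz], ?_⟩
    rcases z' with _ | ⟨c, w⟩
    · refine Or.inr fun hdl => ?_
      simp only [List.dropLast_singleton, contract_nil] at hdl
      exact List.cons_ne_nil _ _ hdl.symm
    · refine Or.inr fun hdl => ?_
      rw [show (t :: c :: w).dropLast = t :: (c :: w).dropLast by simp,
        contract_cons_of_notMem ht, List.cons.injEq] at hdl
      rcases hmin with h | h
      · exact (List.cons_ne_nil _ _) h
      · exact h hdl.2

lemma minPref_preim_pair (ht : t ∉ K) (s : α) :
    minPref (preim K [t, s]) = {[t, s]} := by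
  ext z
  simp only [Set.mem_singleton_iff]
  constructor
  · intro hzm
    obtain ⟨hz, -⟩ := mem_minPref_preim_iff.1 hzm
    rcases z with _ | ⟨u, z'⟩
    · simp at hz
    · rw [contract_cons, List.cons.injEq] at hz
      obtain ⟨rfl, -⟩ := hz
      rw [minPref_preim_cons_of_notMem ht, minPref_preim_singleton] at hzm
      simp only [Set.mem_singleton_iff] at hzm
      rw [hzm]
  · rintro rfl
    have h1 : [s] ∈ minPref (preim K [s]) := by
      rw [minPref_preim_singleton]; rfl
    exact (minPref_preim_cons_of_notMem ht [s] [s]).2 h1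

end PA
namespace PA

variable {α : Type*} [DecidableEq α] {K S₁ : Finset α} {b : Bool} {a c s t : α}
variable {l p q z z₁ z₂ w₁ w₂ u v w x y : List α} {P : List α → ℝ≥0∞}

lemma setP_of_minPref_eq_singleton {R : Set (List α)} (h : minPref R = {w}) :
    setP P R = P w := by
  rw [setP, h]
  exact tsum_singleton w P

lemma setP_preim_nil : setP P (preim K []) = P [] :=
  setP_of_minPref_eq_singleton minPref_preim_nil

lemma setP_preim_singleton (s : α) : setP P (preim K [s]) = P [s] :=
  setP_of_minPref_eq_singleton (minPref_preim_singleton s)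

lemma setP_preim_pair (ht : t ∉ K) (s : α) : setP P (preim K [t, s]) = P [t, s] :=
  setP_of_minPref_eq_singleton (minPref_preim_pair ht s)

lemma contract_head? : (contract K z).head? = z.head? := by
  cases z <;> simp [contract_cons]

/-- If `s ∈ S₁` occurs in the contraction of `z`, it occurs in `z` either at the
head or preceded by a letter outside `S₁`. -/
lemma mem_contract_cases (hs : s ∈ S₁) :
    ∀ (z : List α) (b : Bool), s ∈ contractAux S₁ b z →
      (b = false ∧ z.head? = some s) ∨ ∃ t, t ∉ S₁ ∧ [t, s] <:+: z := by
  have lift : ∀ {z : List α} {t : α} (a : α), [t, s] <:+: z → [t, s] <:+: a :: z := by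
    rintro z t a ⟨u', v', huv⟩
    exact ⟨a :: u', v', by rw [← huv]; simp⟩
  intro z
  induction z with
  | nil => simp
  | cons a z ih =>
    intro b hm
    rw [contractAux_cons] at hm
    by_cases ha : a ∈ S₁
    · rw [if_pos ha] at hm
      cases b with
      | true =>
        rcases ih true (by rwa [if_pos rfl] at hm) with ⟨h, -⟩ | ⟨t, ht, hinf⟩
        · exact absurd h (by simp)
        · exact Or.inr ⟨t, ht, lift a hinf⟩
      | false =>
        rw [if_neg (by simp)] at hm
        rcases List.mem_cons.1 hm with rfl | hm'
        · exact Or.inl ⟨rfl, rfl⟩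
        · rcases ih true hm' with ⟨h, -⟩ | ⟨t, ht, hinf⟩
          · exact absurd h (by simp)
          · exact Or.inr ⟨t, ht, lift a hinf⟩
    · rw [if_neg ha] at hm
      rcases List.mem_cons.1 hm with rfl | hm'
      · exact absurd hs ha
      · rcases ih false hm' with ⟨-, h⟩ | ⟨t, ht, hinf⟩
        · rcases z with _ | ⟨c, w⟩
          · simp at h
          · simp only [List.head?_cons, Option.some.injEq] at h
            subst h
            exact Or.inr ⟨a, ha, ⟨[], w, by simp⟩⟩
        · exact Or.inr ⟨t, ht, lift a hinf⟩

end PA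
namespace PA

variable {α : Type*} [DecidableEq α] {K S₁ : Finset α} {s t : α}
variable {z x y : List α} {P : List α → ℝ≥0∞}

lemma minPref_trans_mem (hSK : S₁ ⊆ K) (hz : z ∈ minPref (preim K x)) :
    contract S₁ z ∈ minPref (preim K x) ∧ z ∈ minPref (preim S₁ (contract S₁ z)) := by
  rw [mem_minPref_preim_iff] at hz
  obtain ⟨hz1, hz2⟩ := hz
  rcases eq_or_ne z [] with rfl | hne
  · simp only [contract_nil] at hz1 ⊢
    subst hz1
    constructor <;> rw [mem_minPref_preim_iff] <;> exact ⟨rfl, Or.inl rfl⟩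
  · have hyK : contract K (contract S₁ z) = x := by rw [contract_contract hSK, hz1]
    have hds : contract S₁ z.dropLast ≠ contract S₁ z := by
      intro h
      have : contract K z.dropLast = x := by
        rw [← contract_contract hSK, h, contract_contract hSK, hz1]
      exact (hz2.resolve_left hne) this
    have hprod := contract_of_dropLast_ne hne hds
    constructor
    · rw [mem_minPref_preim_iff]
      refine ⟨hyK, Or.inr ?_⟩
      have hdl : (contract S₁ z).dropLast = contract S₁ z.dropLast := by
        rw [hprod]; simp
      rw [hdl, contract_contract hSK]
      exact hz2.resolve_left hne
    · rw [mem_minPref_preim_iff]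
      exact ⟨rfl, Or.inr hds⟩

lemma minPref_trans_mem' (hSK : S₁ ⊆ K) (hy : y ∈ minPref (preim K x))
    (hz : z ∈ minPref (preim S₁ y)) : z ∈ minPref (preim K x) := by
  rw [mem_minPref_preim_iff] at hy hz ⊢
  obtain ⟨hy1, hy2⟩ := hy
  obtain ⟨hz1, hz2⟩ := hz
  refine ⟨by rw [← contract_contract hSK, hz1, hy1], ?_⟩
  rcases eq_or_ne z [] with rfl | hne
  · exact Or.inl rfl
  · refine Or.inr fun hcontra => ?_
    have hyne : y ≠ [] := by
      rintro rfl
      rw [contract_eq_nil_iff] at hz1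
      exact hne hz1
    have hds : contract S₁ z.dropLast ≠ contract S₁ z := by rw [hz1]; exact hz2.resolve_left hne
    have hprod := contract_of_dropLast_ne hne hds
    have hdl : contract S₁ z.dropLast = y.dropLast := by rw [← hz1, hprod]; simp
    rw [← contract_contract hSK, hdl] at hcontra
    exact (hy2.resolve_left hyne) hcontra

/-- The sigma decomposition of the minimal `K`-preimages of `x` through
intermediate `S₁`-contractions. -/
noncomputable def sigmaEquiv (hSK : S₁ ⊆ K) (x : List α) :
    (minPref (preim K x) : Set (List α)) ≃
      Σ y : (minPref (preim K x) : Set (List α)), (minPref (preim S₁ y.1) : Set (List α)) where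
  toFun z := ⟨⟨contract S₁ z.1, (minPref_trans_mem hSK z.2).1⟩,
    ⟨z.1, (minPref_trans_mem hSK z.2).2⟩⟩
  invFun p := ⟨p.2.1, minPref_trans_mem' hSK p.1.2 p.2.2⟩
  left_inv z := rfl
  right_inv p := by
    rcases p with ⟨⟨y, hy⟩, ⟨z, hz⟩⟩
    have h : contract S₁ z = y := hz.1
    subst h
    rfl

lemma setP_preim_eq_tsum (hSK : S₁ ⊆ K) (P : List α → ℝ≥0∞) (x : List α) :
    setP P (preim K x) = ∑' y : (minPref (preim K x) : Set (List α)), setP P (preim S₁ y.1) := by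
  rw [setP, ← Equiv.tsum_eq (sigmaEquiv hSK x).symm (fun z => P z.1)]
  rw [show (fun p => P (((sigmaEquiv hSK x).symm p).1 : List α)) =
    (fun p : Σ y : (minPref (preim K x) : Set (List α)),
      (minPref (preim S₁ y.1) : Set (List α)) => P p.2.1) from rfl]
  exact ENNReal.tsum_sigma
    (fun (y : (minPref (preim K x) : Set (List α)))
      (b : (minPref (preim S₁ y.1) : Set (List α))) => P b.1)

/-- `P` vanishes on words containing an infix `[t, s]` with `P [t, s] = 0`. -/
lemma P_eq_zero_of_infix (hP4 : ∀ (x y : List α) (s : α), P (x ++ s :: y) = P (x ++ [s]) * P (s :: y))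
    (hts : P [t, s] = 0) (h : [t, s] <:+: z) : P z = 0 := by
  obtain ⟨u', v', rfl⟩ := h
  have e1 : u' ++ [t, s] ++ v' = u' ++ t :: (s :: v') := by simp
  rw [e1, hP4 u' (s :: v') t]
  have e2 : (t : α) :: s :: v' = [t] ++ s :: v' := by simp
  rw [e2, hP4 [t] v' s]
  have : P ([t] ++ [s]) = 0 := hts
  rw [this]
  simp

end PA
namespace PA

variable {α : Type*} [DecidableEq α] {K : Finset α} {s t : α}
variable {z z₁ z₂ u v w x y : List α} {P : List α → ℝ≥0∞}

lemma minPref_snoc_decomp (hz : z ∈ minPref (preim K (w ++ [s]))) :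
    ∃ z₀, z = z₀ ++ [s] ∧ contract K z₀ = w := by
  rw [mem_minPref_preim_iff] at hz
  obtain ⟨hz1, hz2⟩ := hz
  have hne : z ≠ [] := by rintro rfl; simp at hz1
  have hd : contract K z.dropLast ≠ contract K z := by
    rw [hz1]; exact hz2.resolve_left hne
  have hprod := contract_of_dropLast_ne hne hd
  rw [hz1] at hprod
  have hinj := List.append_inj' hprod rfl
  refine ⟨z.dropLast, ?_, hinj.1.symm⟩
  have hl : z.getLast hne = s := by
    have := hinj.2
    simpa using this.symm
  rw [← hl]
  exact (List.dropLast_append_getLast hne).symm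

lemma minPref_cons_decomp (hz : z ∈ minPref (preim K (s :: v))) : ∃ w', z = s :: w' := by
  have h1 := (mem_minPref_preim_iff.1 hz).1
  rcases z with _ | ⟨c, w'⟩
  · simp at h1
  · rw [contract_cons, List.cons.injEq] at h1
    exact ⟨w', by rw [h1.1]⟩

lemma fuse_mem_minPref (hz1 : z₁ ∈ minPref (preim K (u ++ [s])))
    (hz2 : z₂ ∈ minPref (preim K (s :: v))) :
    fuse z₁ z₂ ∈ minPref (preim K (u ++ s :: v)) := by
  obtain ⟨z₀, rfl, hz0⟩ := minPref_snoc_decomp hz1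
  obtain ⟨w', rfl⟩ := minPref_cons_decomp hz2
  have hz1' := (mem_minPref_preim_iff.1 hz1).1
  have hz2' := mem_minPref_preim_iff.1 hz2
  have hw : contractAux K (decide (s ∈ K)) w' = v := by
    have := hz2'.1
    rw [contract_cons, List.cons.injEq] at this
    exact this.2
  have hfuse : fuse (z₀ ++ [s]) (s :: w') = (z₀ ++ [s]) ++ w' := rfl
  have hcontr : contract K ((z₀ ++ [s]) ++ w') = u ++ s :: v := by
    rw [show contract K ((z₀ ++ [s]) ++ w') =
        contractAux K false ((z₀ ++ [s]) ++ w') from rfl,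
      contractAux_append, lastMem_snoc]
    rw [show contractAux K false (z₀ ++ [s]) = contract K (z₀ ++ [s]) from rfl, hz1', hw]
    simp
  rw [mem_minPref_preim_iff, hfuse]
  refine ⟨hcontr, Or.inr ?_⟩
  rcases eq_or_ne w' [] with rfl | hwne
  · have hv : v = [] := by simpa using hw.symm
    subst hv
    intro hcon
    rw [List.append_nil, List.dropLast_concat, hz0] at hcon
    have := congrArg List.length hcon
    simp at this
  · intro hcon
    rw [List.dropLast_append_of_ne_nil hwne] at hcon
    rw [show contract K ((z₀ ++ [s]) ++ w'.dropLast) =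
        contractAux K false ((z₀ ++ [s]) ++ w'.dropLast) from rfl,
      contractAux_append, lastMem_snoc,
      show contractAux K false (z₀ ++ [s]) = contract K (z₀ ++ [s]) from rfl, hz1'] at hcon
    have hveq : contractAux K (decide (s ∈ K)) w'.dropLast = v := by
      have : u ++ s :: v = (u ++ [s]) ++ v := by simp
      rw [this] at hcon
      exact List.append_cancel_left hcon
    have hmin2 := hz2'.2.resolve_left (List.cons_ne_nil s w')
    refine hmin2 ?_
    rw [show (s :: w').dropLast = s :: w'.dropLast by
      rcases w' with _ | ⟨a', l'⟩
      · exact absurd rfl hwne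
      · exact List.dropLast_cons₂]
    rw [contract_cons, hveq]

lemma fuse_inj_aux (hz1 : z₁ ∈ minPref (preim K (u ++ [s])))
    (hw1 : w₁ ∈ minPref (preim K (u ++ [s]))) (hpre : z₁ <+: w₁) : z₁ = w₁ := by
  by_contra hne
  exact hw1.2 z₁ hpre hne hz1.1

lemma fuse_injective (hz1 : z₁ ∈ minPref (preim K (u ++ [s])))
    (hw1 : w₁ ∈ minPref (preim K (u ++ [s])))
    {z₂ w₂ : List α}
    (hz2 : z₂ ∈ minPref (preim K (s :: v))) (hw2 : w₂ ∈ minPref (preim K (s :: v)))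
    (h : fuse z₁ z₂ = fuse w₁ w₂) : z₁ = w₁ ∧ z₂ = w₂ := by
  have hp1 : z₁ <+: fuse z₁ z₂ := List.prefix_append _ _
  have hp2 : w₁ <+: fuse z₁ z₂ := h ▸ List.prefix_append _ _
  have heq : z₁ = w₁ := by
    rcases List.prefix_or_prefix_of_prefix hp1 hp2 with hp | hp
    · exact fuse_inj_aux hz1 hw1 hp
    · exact (fuse_inj_aux hw1 hz1 hp).symm
  subst heq
  refine ⟨rfl, ?_⟩
  have htails : z₂.tail = w₂.tail := List.append_cancel_left h
  obtain ⟨a', rfl⟩ := minPref_cons_decomp hz2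
  obtain ⟨b', rfl⟩ := minPref_cons_decomp hw2
  simp only [List.tail_cons] at htails
  rw [htails]

lemma fuse_surjective (hz : z ∈ minPref (preim K (u ++ s :: v))) :
    ∃ z₁ z₂, z₁ ∈ minPref (preim K (u ++ [s])) ∧ z₂ ∈ minPref (preim K (s :: v)) ∧
      z = fuse z₁ z₂ := by
  have hz1 := (mem_minPref_preim_iff.1 hz).1
  have hps : u ++ [s] <+: contract K z := by
    rw [hz1]
    exact ⟨v, by simp⟩
  obtain ⟨q0, hq0, hcq0⟩ := exists_prefix_contract hps
  -- choose a shortest prefix of z contracting to u ++ [s]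
  have hex : ∃ n, ∃ q, q <+: z ∧ q.length = n ∧ contract K q = u ++ [s] :=
    ⟨q0.length, q0, hq0, rfl, hcq0⟩
  classical
  obtain ⟨q, hq, hqlen, hcq⟩ := Nat.find_spec hex
  have hqmin : q ∈ minPref (preim K (u ++ [s])) := by
    refine ⟨hcq, fun p hp hne hpL => ?_⟩
    have hplt : p.length < q.length :=
      lt_of_le_of_ne hp.length_le fun hl => hne (List.IsPrefix.eq_of_length hp hl)
    have := Nat.find_min hex (m := p.length) (by omega)
    exact this ⟨p, hp.trans hq, rfl, hpL⟩
  obtain ⟨rest, rfl⟩ := hq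
  obtain ⟨q₀, hq₀, hcq₀⟩ := minPref_snoc_decomp hqmin
  have hlm : lastMem K false q = decide (s ∈ K) := by rw [hq₀, lastMem_snoc]
  have hcz : contract K (q ++ rest) = contract K q ++ contractAux K (decide (s ∈ K)) rest := by
    rw [show contract K (q ++ rest) = contractAux K false (q ++ rest) from rfl,
      contractAux_append, hlm]
    rfl
  have hrest : contractAux K (decide (s ∈ K)) rest = v := by
    rw [hz1, hcq] at hcz
    have : u ++ s :: v = (u ++ [s]) ++ v := by simp
    rw [this] at hcz
    exact (List.append_cancel_left hcz).symm
  refine ⟨q, s :: rest, hqmin, ?_, ?_⟩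
  · rw [mem_minPref_preim_iff]
    refine ⟨by rw [contract_cons, hrest], Or.inr ?_⟩
    rcases eq_or_ne rest [] with rfl | hrne
    · simp only [List.dropLast_singleton, contract_nil]
      exact fun h => List.cons_ne_nil s v h.symm
    · rw [show (s :: rest).dropLast = s :: rest.dropLast by
        rcases rest with _ | ⟨a', l'⟩
        · exact absurd rfl hrne
        · exact List.dropLast_cons₂]
      rw [contract_cons]
      intro hcon
      rw [List.cons.injEq] at hcon
      have hdz : contract K (q ++ rest.dropLast) = u ++ s :: v := by
        rw [show contract K (q ++ rest.dropLast) =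
          contractAux K false (q ++ rest.dropLast) from rfl, contractAux_append, hlm,
          show contractAux K false q = contract K q from rfl, hcq, hcon.2]
        simp
      have hmin := (mem_minPref_preim_iff.1 hz).2.resolve_left (by
        intro h
        exact absurd (List.append_eq_nil_iff.1 h).1 (by rintro rfl; simp at hcq))
      refine hmin ?_
      rw [List.dropLast_append_of_ne_nil hrne]
      exact hdz
  · rw [fuse, List.tail_cons]

lemma P_fuse (hP4 : ∀ (x y : List α) (s : α), P (x ++ s :: y) = P (x ++ [s]) * P (s :: y))
    (hz1 : z₁ ∈ minPref (preim K (u ++ [s]))) (hz2 : z₂ ∈ minPref (preim K (s :: v))) :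
    P (fuse z₁ z₂) = P z₁ * P z₂ := by
  obtain ⟨z₀, rfl, -⟩ := minPref_snoc_decomp hz1
  obtain ⟨w', rfl⟩ := minPref_cons_decomp hz2
  rw [show fuse (z₀ ++ [s]) (s :: w') = z₀ ++ s :: w' by rw [fuse, List.tail_cons]; simp]
  exact hP4 z₀ w' s

/-- The splitting equivalence for minimal preimages of `u ++ s :: v`. -/
noncomputable def splitEquiv (K : Finset α) (u v : List α) (s : α) :
    ((minPref (preim K (u ++ [s])) : Set (List α)) ×
      (minPref (preim K (s :: v)) : Set (List α))) ≃
      (minPref (preim K (u ++ s :: v)) : Set (List α)) :=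
  Equiv.ofBijective
    (fun p => ⟨fuse p.1.1 p.2.1, fuse_mem_minPref p.1.2 p.2.2⟩)
    (by
      constructor
      · rintro ⟨⟨z₁, hz1⟩, ⟨z₂, hz2⟩⟩ ⟨⟨w₁, hw1⟩, ⟨w₂, hw2⟩⟩ h
        simp only [Subtype.mk.injEq] at h
        obtain ⟨h1, h2⟩ := fuse_injective hz1 hw1 hz2 hw2 h
        simp [Prod.ext_iff, Subtype.ext_iff, h1, h2]
      · rintro ⟨z, hz⟩
        obtain ⟨z₁, z₂, hz1, hz2, hfe⟩ := fuse_surjective hz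
        exact ⟨⟨⟨z₁, hz1⟩, ⟨z₂, hz2⟩⟩, by simp [hfe]⟩)

lemma setP_preim_split
    (hP4 : ∀ (x y : List α) (s : α), P (x ++ s :: y) = P (x ++ [s]) * P (s :: y))
    (u v : List α) (s : α) :
    setP P (preim K (u ++ s :: v)) = setP P (preim K (u ++ [s])) * setP P (preim K (s :: v)) := by
  rw [setP, ← Equiv.tsum_eq (splitEquiv K u v s) (fun z => P z.1)]
  have : ∀ p : ((minPref (preim K (u ++ [s])) : Set (List α)) ×
      (minPref (preim K (s :: v)) : Set (List α))),
      P ((splitEquiv K u v s p : List α)) = P p.1.1 * P p.2.1 := by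
    rintro ⟨⟨z₁, hz1⟩, ⟨z₂, hz2⟩⟩
    exact P_fuse hP4 hz1 hz2
  rw [tsum_congr this]
  rw [ENNReal.tsum_prod (f := fun (a : (minPref (preim K (u ++ [s])) : Set (List α)))
    (b : (minPref (preim K (s :: v)) : Set (List α))) => P a.1 * P b.1)]
  simp only [ENNReal.tsum_mul_left, ENNReal.tsum_mul_right]
  rfl

end PA
namespace PA

variable {α : Type*} [Fintype α] [DecidableEq α] {K S₁ : Finset α} {a s t : α}
variable {x y z : List α} {P : List α → ℝ≥0∞}

/-- The properties of a TPF needed for the abstraction theory, and preserved by `abstr`. -/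
def Good (P : List α → ℝ≥0∞) : Prop :=
  (∀ s : α, P [s] = 1) ∧
    ∀ (x y : List α) (s : α), P (x ++ s :: y) = P (x ++ [s]) * P (s :: y)

lemma abstr_len_one (h : x.length = 1) : abstr P a K x = 1 := by
  rw [abstr, if_pos h]

lemma abstr_singleton (s : α) : abstr P a K [s] = 1 := abstr_len_one rfl

lemma abstr_nil : abstr P a K ([] : List α) = P [] := by
  rw [abstr, if_neg (by simp), if_neg (by simp), setP_preim_nil]

lemma abstr_of_two_le (hx : 2 ≤ x.length) (hni : ¬∃ s ∈ x, s ∈ interior P a K) :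
    abstr P a K x = setP P (preim K x) := by
  rw [abstr, if_neg (by omega), if_neg fun h => hni h.2]

lemma abstr_of_interior (hx : 2 ≤ x.length) (hi : ∃ s ∈ x, s ∈ interior P a K) :
    abstr P a K x = 0 := by
  rw [abstr, if_neg (by omega), if_pos ⟨hx, hi⟩]

lemma interior_mono (hSK : S₁ ⊆ K) (hs : s ∈ interior P a S₁) : s ∈ interior P a K := by
  obtain ⟨h1, h2, h3⟩ := hs
  refine ⟨hSK h1, h2, ?_⟩
  refine Finset.sum_eq_zero fun t htm => ?_
  exact (Finset.sum_eq_zero_iff.1 h3) t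
    (Finset.mem_compl.2 fun hts1 => (Finset.mem_compl.1 htm) (hSK hts1))

lemma P_pair_eq_zero_of_interior (hsi : s ∈ interior P a S₁) (ht : t ∉ S₁) :
    P [t, s] = 0 := by
  obtain ⟨-, -, h3⟩ := hsi
  exact (Finset.sum_eq_zero_iff.1 h3) t (Finset.mem_compl.2 ht)

lemma interior_abstr (hSK : S₁ ⊆ K) : interior (abstr P a S₁) a K = interior P a K := by
  ext s
  show (s ∈ K ∧ s ≠ a ∧ (∑ t ∈ Kᶜ, abstr P a S₁ [t, s]) = 0) ↔
    (s ∈ K ∧ s ≠ a ∧ (∑ t ∈ Kᶜ, P [t, s]) = 0)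
  refine and_congr_right fun hsK => and_congr_right fun hsa => ?_
  have he : ∀ t ∈ Kᶜ, abstr P a S₁ [t, s] = P [t, s] := by
    intro t htm
    have htK : t ∉ K := Finset.mem_compl.1 htm
    have htS : t ∉ S₁ := fun h => htK (hSK h)
    by_cases hi : ∃ r ∈ [t, s], r ∈ interior P a S₁
    · obtain ⟨r, hrm, hri⟩ := hi
      have hrs : r = s := by
        rcases List.mem_cons.1 hrm with rfl | hr
        · exact absurd hri.1 htS
        · simpa using hr
      subst hrs
      rw [abstr_of_interior (by simp) ⟨r, hrm, hri⟩,
        P_pair_eq_zero_of_interior hri htS]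
    · rw [abstr_of_two_le (by simp) hi, setP_preim_pair htS]
  rw [Finset.sum_congr rfl he]

lemma two_le_length_append (hx : x ≠ []) (s : α) : 2 ≤ (x ++ [s]).length := by
  rcases x with _ | ⟨c, x'⟩
  · exact absurd rfl hx
  · simp only [List.length_append, List.length_cons, List.length_nil]
    omega

lemma two_le_length_cons' (hy : y ≠ []) (s : α) : 2 ≤ (s :: y).length := by
  rcases y with _ | ⟨c, y'⟩
  · exact absurd rfl hy
  · simp only [List.length_cons]
    omega

lemma abstr_mul (hG : Good P) (x y : List α) (s : α) :
    abstr P a S₁ (x ++ s :: y) = abstr P a S₁ (x ++ [s]) * abstr P a S₁ (s :: y) := by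
  by_cases hxy : x = [] ∧ y = []
  · obtain ⟨rfl, rfl⟩ := hxy
    simp [abstr_singleton]
  · have hlen : 2 ≤ (x ++ s :: y).length := by
      rcases x with _ | ⟨c, x'⟩
      · rcases y with _ | ⟨d, y'⟩
        · exact absurd ⟨rfl, rfl⟩ hxy
        · simp
      · simp; omega
    by_cases hi : ∃ r ∈ x ++ s :: y, r ∈ interior P a S₁
    · rw [abstr_of_interior hlen hi]
      obtain ⟨r, hrm, hri⟩ := hi
      rcases List.mem_append.1 hrm with hrx | hrsy
      · have hx : x ≠ [] := by rintro rfl; simp at hrx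
        rw [abstr_of_interior (two_le_length_append hx s)
          ⟨r, List.mem_append_left _ hrx, hri⟩, zero_mul]
      · rcases List.mem_cons.1 hrsy with rfl | hry
        · rcases eq_or_ne y [] with rfl | hy
          · have hx : x ≠ [] := fun h => hxy ⟨h, rfl⟩
            rw [abstr_of_interior (two_le_length_append hx r)
              ⟨r, List.mem_append_right _ (by simp), hri⟩, zero_mul]
          · rw [abstr_of_interior (two_le_length_cons' hy r)
              ⟨r, List.mem_cons_self, hri⟩, mul_zero]
        · rw [abstr_of_interior
            (two_le_length_cons' (by rintro rfl; simp at hry) s)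
            ⟨r, List.mem_cons_of_mem _ hry, hri⟩, mul_zero]
    · rw [abstr_of_two_le hlen hi, setP_preim_split hG.2 x y s]
      have hf1 : abstr P a S₁ (x ++ [s]) = setP P (preim S₁ (x ++ [s])) := by
        rcases eq_or_ne x [] with rfl | hx
        · rw [List.nil_append, abstr_singleton, setP_preim_singleton, hG.1 s]
        · refine abstr_of_two_le (two_le_length_append hx s) ?_
          rintro ⟨r, hrm, hri⟩
          refine hi ⟨r, ?_, hri⟩
          rcases List.mem_append.1 hrm with h | h
          · exact List.mem_append_left _ h
          · simp only [List.mem_singleton] at h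
            subst h
            exact List.mem_append_right _ (List.mem_cons_self)
      have hf2 : abstr P a S₁ (s :: y) = setP P (preim S₁ (s :: y)) := by
        rcases eq_or_ne y [] with rfl | hy
        · rw [abstr_singleton, setP_preim_singleton, hG.1 s]
        · refine abstr_of_two_le (two_le_length_cons' hy s) ?_
          rintro ⟨r, hrm, hri⟩
          exact hi ⟨r, List.mem_append_right _ hrm, hri⟩
      rw [hf1, hf2]

lemma good_abstr (hG : Good P) : Good (abstr P a S₁) :=
  ⟨fun s => abstr_singleton s, fun x y s => abstr_mul hG x y s⟩

lemma setP_preim_eq_zero_of_interior (hG : Good P) (hsi : s ∈ interior P a S₁)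
    (hsy : s ∈ y) (hhead : y.head? ≠ some s) : setP P (preim S₁ y) = 0 := by
  rw [setP, ENNReal.tsum_eq_zero]
  rintro ⟨z, hz⟩
  have hzy : contract S₁ z = y := hz.1
  have hs1 : s ∈ S₁ := hsi.1
  have hsz : s ∈ contractAux S₁ false z := by
    rw [show contractAux S₁ false z = contract S₁ z from rfl, hzy]
    exact hsy
  rcases mem_contract_cases hs1 z false hsz with ⟨-, hh⟩ | ⟨t, ht, hinf⟩
  · refine absurd ?_ hhead
    rw [← hzy, contract_head?, hh]
  · exact P_eq_zero_of_infix hG.2 (P_pair_eq_zero_of_interior hsi ht) hinf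

lemma abstr_abstr (hG : Good P) (hSK : S₁ ⊆ K) :
    abstr (abstr P a S₁) a K = abstr P a K := by
  funext x
  rcases hl1 : x.length with _ | n
  · -- x = []
    have hx : x = [] := List.length_eq_zero_iff.1 hl1
    subst hx
    rw [abstr_nil, abstr_nil, abstr_nil]
  · rcases n with _ | n
    · rw [abstr_len_one hl1, abstr_len_one hl1]
    · have hlen : 2 ≤ x.length := by omega
      by_cases hi : ∃ s ∈ x, s ∈ interior P a K
      · rw [abstr_of_interior hlen hi, abstr_of_interior hlen (by
          rw [interior_abstr hSK]; exact hi)]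
      · rw [abstr_of_two_le hlen (by rw [interior_abstr hSK]; exact hi),
          abstr_of_two_le hlen hi, setP_preim_eq_tsum hSK P x]
        rw [setP]
        refine tsum_congr ?_
        rintro ⟨y, hy⟩
        show abstr P a S₁ y = setP P (preim S₁ y)
        have hcy : contract K y = x := hy.1
        have hylen : 2 ≤ y.length := by
          have := contractAux_length_le (K := K) false y
          rw [show contractAux K false y = contract K y from rfl, hcy] at this
          omega
        by_cases hyi : ∃ s ∈ y, s ∈ interior P a S₁
        · obtain ⟨s, hsy, hsi⟩ := hyi
          rw [abstr_of_interior hylen ⟨s, hsy, hsi⟩]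
          refine (setP_preim_eq_zero_of_interior hG hsi hsy ?_).symm
          intro hh
          have hxh : x.head? = some s := by rw [← hcy, contract_head?, hh]
          exact hi ⟨s, List.mem_of_mem_head? hxh, interior_mono hSK hsi⟩
        · rw [abstr_of_two_le hylen hyi]

theorem abstr_foldl_aux (a : α) (K : Finset α) (L : List (Finset α))
    (hL : ∀ Ki ∈ L, Ki ⊆ K) (P : List α → ℝ≥0∞) (hG : Good P) :
    abstr (L.foldl (fun Q Ki => abstr Q a Ki) P) a K = abstr P a K := by
  induction L generalizing P with
  | nil => rfl
  | cons S₁ L ih =>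
    rw [List.foldl_cons,
      ih (fun Ki h => hL Ki (List.mem_cons_of_mem _ h)) _ (good_abstr hG)]
    exact abstr_abstr hG (hL S₁ (List.mem_cons_self))

end PA

open scoped ENNReal in
/-- abstracting along any finite sequence of subsets of `K` and then
over `K` equals abstracting over `K` directly. -/
theorem abstr_foldl {α : Type*} [Fintype α] [DecidableEq α]
    (a : α) (K : Finset α) (L : List (Finset α)) (hL : ∀ Ki ∈ L, Ki ⊆ K)
    (P : List α → ℝ≥0∞) (hP : PA.IsTPF P) :
    PA.abstr (L.foldl (fun Q Ki => PA.abstr Q a Ki) P) a K = PA.abstr P a K :=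
  PA.abstr_foldl_aux a K L hL P ⟨hP.2.1, hP.2.2.2⟩
end
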